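/- Let a ∈ V* satisfy a(R_i) = 0 for all i, let Ω' := Ω + a ∧ (Σ_{i=1}^q λ_i) with R_i' := R_i + b⁻¹(a) as above. Then for every φ ∈ V*, the vector w_φ := b⁻¹(φ − Σ_{i=1}^q φ(R_i)·λ_i) satisfies λ_j(w_φ) = 0 for all j and Ω'(w_φ, ·) = φ − Σ_{i=1}^q φ(R_i')·λ_i. In other words, the Ω-Hamiltonian vector of φ coincides with the Ω'-Hamiltonian vector of φ. (Pointwise form of the theorem that X_f = X_f' and hence {f₁,f₂} = {f₁,f₂}' for the deformed q-cosymplectic structure.) -/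

import Mathlib

/-- With linear `q`-cosymplectic data, `b` a linear isomorphism with
inverse `b⁻¹`, `a ∈ V*` with `a(R_i) = 0` for all `i`, and
`Ω' := Ω + a ∧ (Σ_i λ_i)`, set `R_i' := R_i + b⁻¹(a)`.  Then for every `φ ∈ V*` the
vector `w_φ := b⁻¹(φ − Σ_i φ(R_i)·λ_i)` satisfies `λ_j(w_φ) = 0` for all `j` and
`Ω'(w_φ, ·) = φ − Σ_i φ(R_i')·λ_i`: the `Ω`-Hamiltonian vector of `φ` coincides with
its `Ω'`-Hamiltonian vector. -/
theorem stmt_6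
    {n q : ℕ} (hn : 0 < n) (hq : 0 < q)
    (V : Type*) [AddCommGroup V] [Module ℝ V] [FiniteDimensional ℝ V]
    (hdim : Module.finrank ℝ V = 2 * n + q)
    (Ω : V →ₗ[ℝ] V →ₗ[ℝ] ℝ) (hΩalt : ∀ v : V, Ω v v = 0)
    (lam : Fin q → (V →ₗ[ℝ] ℝ)) (hlam : LinearIndependent ℝ lam)
    (R : Fin q → V)
    (hΩR : ∀ i, Ω (R i) = 0)
    (hlamR : ∀ i j, lam i (R j) = if i = j then (1 : ℝ) else 0)
    (hsplit : IsCompl (Submodule.span ℝ (Set.range R))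
      (⨅ i, LinearMap.ker (lam i)))
    (hnondeg : ∀ v ∈ (⨅ i, LinearMap.ker (lam i)),
      (∀ w ∈ (⨅ i, LinearMap.ker (lam i)), Ω v w = 0) → v = 0)
    (b : V →ₗ[ℝ] (V →ₗ[ℝ] ℝ))
    (hb : ∀ v : V, b v = Ω v + ∑ i, lam i v • lam i)
    (binv : (V →ₗ[ℝ] ℝ) → V)
    (hbinv₁ : ∀ α : V →ₗ[ℝ] ℝ, b (binv α) = α)
    (hbinv₂ : ∀ v : V, binv (b v) = v)
    (a : V →ₗ[ℝ] ℝ) (ha : ∀ i, a (R i) = 0)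
    (Ω' : V →ₗ[ℝ] V →ₗ[ℝ] ℝ)
    (hΩ' : ∀ u v : V,
      Ω' u v = Ω u v + a u * (∑ i, lam i v) - a v * (∑ i, lam i u)) :
    ∀ φ : V →ₗ[ℝ] ℝ,
      (∀ j : Fin q, lam j (binv (φ - ∑ i, φ (R i) • lam i)) = 0) ∧
      Ω' (binv (φ - ∑ i, φ (R i) • lam i))
        = φ - ∑ i, φ (R i + binv a) • lam i := by
  -- antisymmetry of Ω
  have hanti : ∀ u v : V, Ω u v = - Ω v u := by
    intro u v
    have h := hΩalt (u + v)
    simp only [map_add, LinearMap.add_apply, hΩalt] at h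
    linarith
  -- if α kills all R_j then λ_j (binv α) = 0
  have hkey : ∀ α : V →ₗ[ℝ] ℝ, (∀ j, α (R j) = 0) → ∀ j, lam j (binv α) = 0 := by
    intro α hα j
    have h := congrArg (fun f : V →ₗ[ℝ] ℝ => f (R j)) (hbinv₁ α)
    simp only [hb (binv α), LinearMap.add_apply, LinearMap.sum_apply,
      LinearMap.smul_apply, smul_eq_mul, hα j] at h
    have hΩterm : Ω (binv α) (R j) = 0 := by
      rw [hanti]; simp [hΩR j]
    rw [hΩterm] at h
    have hsum : (∑ i, lam i (binv α) * lam i (R j)) = lam j (binv α) := by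
      rw [Finset.sum_eq_single j]
      · simp [hlamR j j]
      · intro i _ hij; simp [hlamR i j, hij]
      · simp
    rw [hsum] at h
    linarith
  -- λ_j (binv a) = 0
  have hlama : ∀ j, lam j (binv a) = 0 := hkey a ha
  -- b w v = α v gives Ω w v
  intro φ
  set ψ : V →ₗ[ℝ] ℝ := φ - ∑ i, φ (R i) • lam i with hψ
  have hψR : ∀ j, ψ (R j) = 0 := by
    intro j
    simp only [hψ, LinearMap.sub_apply, LinearMap.sum_apply, LinearMap.smul_apply,
      smul_eq_mul]
    have hsum : (∑ i, φ (R i) * lam i (R j)) = φ (R j) := by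
      rw [Finset.sum_eq_single j]
      · simp [hlamR j j]
      · intro i _ hij; simp [hlamR i j, hij]
      · simp
    rw [hsum]; ring
  have hlamw : ∀ j, lam j (binv ψ) = 0 := hkey ψ hψR
  refine ⟨hlamw, ?_⟩
  set w := binv ψ with hw
  -- Ω w v = ψ v
  have hΩw : ∀ v : V, Ω w v = ψ v := by
    intro v
    have h := congrArg (fun f : V →ₗ[ℝ] ℝ => f v) (hbinv₁ ψ)
    rw [← hw] at h
    simp only [hb w, LinearMap.add_apply, LinearMap.sum_apply, LinearMap.smul_apply,
      smul_eq_mul] at h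
    have : (∑ i, lam i w * lam i v) = 0 := by
      apply Finset.sum_eq_zero; intro i _; rw [hlamw i]; ring
    rw [this] at h; linarith
  -- a w = - φ (binv a)
  have haw : a w = - φ (binv a) := by
    have h := congrArg (fun f : V →ₗ[ℝ] ℝ => f w) (hbinv₁ a)
    simp only [hb (binv a), LinearMap.add_apply, LinearMap.sum_apply,
      LinearMap.smul_apply, smul_eq_mul] at h
    have hsum0 : (∑ i, lam i (binv a) * lam i w) = 0 := by
      apply Finset.sum_eq_zero; intro i _; rw [hlama i]; ring
    rw [hsum0] at h
    have h2 : Ω (binv a) w = - ψ (binv a) := by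
      rw [hanti, hΩw]
    have hψa : ψ (binv a) = φ (binv a) := by
      simp only [hψ, LinearMap.sub_apply, LinearMap.sum_apply, LinearMap.smul_apply,
        smul_eq_mul]
      have : (∑ i, φ (R i) * lam i (binv a)) = 0 := by
        apply Finset.sum_eq_zero; intro i _; rw [hlama i]; ring
      rw [this]; ring
    rw [h2, hψa] at h
    linarith
  -- conclude
  ext v
  have hΩ'wv := hΩ' w v
  have hsumw : (∑ i, lam i w) = 0 := by
    apply Finset.sum_eq_zero; intro i _; exact hlamw i
  rw [hΩw v, hsumw, haw] at hΩ'wv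
  simp only [hΩ'wv, hψ, LinearMap.sub_apply, LinearMap.sum_apply, LinearMap.smul_apply,
    smul_eq_mul, map_add]
  have hsplit2 : ∑ x, (φ (R x) + φ (binv a)) * lam x v
      = (∑ x, φ (R x) * lam x v) + ∑ x, φ (binv a) * lam x v := by
    rw [← Finset.sum_add_distrib]
    exact Finset.sum_congr rfl fun i _ => by ring
  rw [hsplit2, Finset.mul_sum]
  have hneg : ∑ i, -φ (binv a) * lam i v = -∑ i, φ (binv a) * lam i v := by
    rw [← Finset.sum_neg_distrib]
    exact Finset.sum_congr rfl fun i _ => by ring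
  rw [hneg]
  ring
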